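/- Let r ≥ 2+√3 and set ρ = r + 1/r and q(r) = ρ²/(8ρ − 16). Then: (i) for every Pigou instance G_P(a, n) and every WCR equilibrium x ∈ [0, n] of G_P(a, n) with uncertainty r, SC(x) ≤ q(r)·min_{y∈[0,n]} SC(y); and (ii) there exist a > 0, n > 0 and a WCR equilibrium x of G_P(a, n) with uncertainty r such that SC(x) = q(r)·min_{y∈[0,n]} SC(y). -/

import Mathlib

/-- Social cost in the Pigou instance `G_P(a,n)`: a mass `x ∈ [0,n]` uses resource 2
(with cost `c₂(t) = a·t`) and a mass `n − x` uses resource 1 (with `c₁(t) = 1`), so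
`SC(x) = (n − x) + a·x²`. -/
noncomputable def pigouSC (a n x : ℝ) : ℝ := (n - x) + a * x ^ 2

/-- Worst-case regret of resource 1 in `G_P(a,n)` under uncertainty `r`. -/
noncomputable def pigouWCR1 (a r x : ℝ) : ℝ := 1 - a * x / r

/-- Worst-case regret of resource 2 in `G_P(a,n)` under uncertainty `r`. -/
noncomputable def pigouWCR2 (a r x : ℝ) : ℝ := a * r * x - 1

/-- `x ∈ [0,n]` is a WCR equilibrium of `G_P(a,n)` with uncertainty `r` iff
`(x < n → WCR₁(x) ≤ WCR₂(x))` and `(x > 0 → WCR₂(x) ≤ WCR₁(x))`. -/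
def PigouWCREq (a n r x : ℝ) : Prop :=
  (x < n → pigouWCR1 a r x ≤ pigouWCR2 a r x) ∧
  (0 < x → pigouWCR2 a r x ≤ pigouWCR1 a r x)

/-- `x ∈ [0,n]` is a WCC equilibrium of `G_P(a,n)` with uncertainty `r` iff
`(x > 0 → a·r·x ≤ 1)` and `(x < n → a·r·x ≥ 1)`. -/
def PigouWCCEq (a n r x : ℝ) : Prop :=
  (0 < x → a * r * x ≤ 1) ∧ (x < n → 1 ≤ a * r * x)

set_option maxHeartbeats 1000000 in
/-- For `r ≥ 2+√3` and `q(r) = ρ²/(8ρ − 16)` with `ρ = r + 1/r`: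
(i) every WCR equilibrium of every Pigou instance has social cost at most `q(r)` times the
optimal social cost; (ii) this bound is tight for some Pigou instance and WCR equilibrium. -/
theorem stmt_8 (r : ℝ) (hr : 2 + Real.sqrt 3 ≤ r) :
    (∀ a n x : ℝ, 0 < a → 0 < n → x ∈ Set.Icc 0 n → PigouWCREq a n r x →
      ∀ y ∈ Set.Icc (0 : ℝ) n,
        pigouSC a n x ≤ (r + 1 / r) ^ 2 / (8 * (r + 1 / r) - 16) * pigouSC a n y) ∧
    (∃ a n x : ℝ, 0 < a ∧ 0 < n ∧ x ∈ Set.Icc 0 n ∧ PigouWCREq a n r x ∧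
      ∃ y ∈ Set.Icc (0 : ℝ) n, (∀ z ∈ Set.Icc (0 : ℝ) n, pigouSC a n y ≤ pigouSC a n z) ∧
        pigouSC a n x = (r + 1 / r) ^ 2 / (8 * (r + 1 / r) - 16) * pigouSC a n y) := by
  have h3 : Real.sqrt 3 ^ 2 = 3 := Real.sq_sqrt (by norm_num)
  have h3n : (0:ℝ) ≤ Real.sqrt 3 := Real.sqrt_nonneg 3
  have hr0 : 0 < r := by nlinarith
  have hr4 : 4 * r ≤ r ^ 2 + 1 := by nlinarith
  set ρ : ℝ := r + 1 / r with hρdef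
  clear_value ρ
  have hρ4 : 4 ≤ ρ := by
    rw [hρdef, ← sub_nonneg]
    have h : r + 1 / r - 4 = (r ^ 2 + 1 - 4 * r) / r := by field_simp
    rw [h]
    exact div_nonneg (by linarith) hr0.le
  have hρpos : 0 < ρ := by linarith
  have hD : 0 < 8 * ρ - 16 := by linarith
  constructor
  · rintro a n x ha hn hx ⟨h1, h2⟩ y hy
    obtain ⟨hx0, hxn⟩ := hx
    obtain ⟨hy0, hyn⟩ := hy
    simp only [pigouSC, pigouWCR1, pigouWCR2] at h1 h2 ⊢
    rcases eq_or_lt_of_le hxn with heq | hlt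
    · subst heq
      have h2' := h2 (by linarith)
      have hanρ : a * x * ρ ≤ 2 := by
        have e : a * x * ρ = a * r * x + a * x / r := by rw [hρdef]; ring
        linarith
    -- x = n here (x got substituted? no: heq : x = n, subst replaces n by x)
      have han : a * x ≤ 1 / 2 := by nlinarith [mul_pos ha hn]
      have hp : 0 ≤ (x - y) * (1 - a * (x + y)) :=
        mul_nonneg (by linarith) (by nlinarith [mul_nonneg ha.le hy0])
      have hB : a * x ^ 2 ≤ x - y + a * y ^ 2 := by nlinarith [hp]
      have hBpos : 0 < x - y + a * y ^ 2 := by nlinarith [mul_pos (mul_pos ha hn) hn]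
      have hq : (1:ℝ) ≤ ρ ^ 2 / (8 * ρ - 16) := by
        rw [le_div_iff₀ hD]; nlinarith
      have := le_mul_of_one_le_left hBpos.le hq
      linarith
    · have h1' := h1 hlt
      have hge : 2 ≤ a * x * ρ := by
        have e : a * x * ρ = a * r * x + a * x / r := by rw [hρdef]; ring
        linarith
      have hx0' : 0 < x := by
        by_contra h
        push_neg at h
        nlinarith [mul_pos ha hρpos]
      have h2' := h2 hx0'
      have hle : a * x * ρ ≤ 2 := by
        have e : a * x * ρ = a * r * x + a * x / r := by rw [hρdef]; ring
        linarith
      have hE : a * x * ρ = 2 := le_antisymm hle hge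
      have key : a * ρ ^ 2 * (ρ ^ 2 * (n - y + a * y ^ 2) - (8 * ρ - 16) * (n - x + a * x ^ 2))
          = ρ ^ 2 * (ρ - 4) ^ 2 * (a * (n - y)) + (ρ ^ 2 * (a * y) - 4 * (ρ - 2)) ^ 2 := by
        linear_combination (-(8 * (ρ - 2)) * (a * x * ρ - ρ + 2)) * hE
      have hpos : 0 ≤ a * ρ ^ 2 * (ρ ^ 2 * (n - y + a * y ^ 2) - (8 * ρ - 16) * (n - x + a * x ^ 2)) := by
        rw [key]
        have t1 : 0 ≤ ρ ^ 2 * (ρ - 4) ^ 2 * (a * (n - y)) :=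
          mul_nonneg (mul_nonneg (sq_nonneg _) (sq_nonneg _)) (mul_nonneg ha.le (by linarith))
        exact add_nonneg t1 (sq_nonneg _)
      have haρ : 0 < a * ρ ^ 2 := by positivity
      have hG : 0 ≤ ρ ^ 2 * (n - y + a * y ^ 2) - (8 * ρ - 16) * (n - x + a * x ^ 2) :=
        nonneg_of_mul_nonneg_right hpos haρ
      rw [div_mul_eq_mul_div, le_div_iff₀ hD]
      linarith
  · refine ⟨1, (4 * ρ - 8) / ρ ^ 2, 2 / ρ, one_pos, ?_, ⟨by positivity, ?_⟩, ?_, ⟨(4 * ρ - 8) / ρ ^ 2, ⟨?_, le_refl _⟩, ?_, ?_⟩⟩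
    · exact div_pos (by linarith) (by positivity)
    · rw [div_le_div_iff₀ hρpos (by positivity)]
      nlinarith
    · have e : pigouWCR1 1 r (2 / ρ) = pigouWCR2 1 r (2 / ρ) := by
        simp only [pigouWCR1, pigouWCR2]
        rw [hρdef]
        field_simp
        ring
      exact ⟨fun _ => le_of_eq e, fun _ => ge_of_eq e⟩
    · exact le_of_lt (div_pos (by linarith) (by positivity))
    · intro z hz
      obtain ⟨hz0, hzn⟩ := hz
      simp only [pigouSC]
      set n : ℝ := (4 * ρ - 8) / ρ ^ 2 with hndef
      have hn2 : n ≤ 1 / 2 := by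
        rw [hndef, div_le_iff₀ (by positivity : (0:ℝ) < ρ ^ 2)]
        nlinarith
      have hp : 0 ≤ (n - z) * (1 - (n + z)) := mul_nonneg (by linarith) (by linarith)
      nlinarith [hp]
    · simp only [pigouSC]
      rw [show (4 * ρ - 8) / ρ ^ 2 - (4 * ρ - 8) / ρ ^ 2 + 1 * ((4 * ρ - 8) / ρ ^ 2) ^ 2
            = ((4 * ρ - 8) / ρ ^ 2) ^ 2 by ring]
      rw [div_mul_eq_mul_div, eq_div_iff hD.ne']
      field_simp
      ring
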